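/- For every integer n ≥ 1, the set A = {a_x : x ∈ L_n} is a resolving set in G_n for the set {a_x : x ∈ L_n} ∪ {b_y : y ∈ W_n} ∪ {c_{0⋯0}, d_∅}, where 0⋯0 denotes the all-zeros word of length n and ∅ denotes the empty word. -/

import Mathlib

/-- `L n`: binary words of length at most `n` that are empty or end in `1` (`true`). -/
abbrev Ln (n : ℕ) := {x : List Bool // x.length ≤ n ∧ (x = [] ∨ x.getLast? = some true)}

/-- `W n`: binary words of length exactly `n`. -/
abbrev Wn (n : ℕ) := {y : List Bool // y.length = n}

/-- Vertex set of the graph `G_n`: a copy of `L n` (the `a` vertices), two copies of `W n`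
(the `b` and `c` vertices) and another copy of `L n` (the `d` vertices). -/
abbrev VGn (n : ℕ) := Ln n ⊕ Wn n ⊕ Wn n ⊕ Ln n

def va {n : ℕ} (x : Ln n) : VGn n := Sum.inl x
def vb {n : ℕ} (y : Wn n) : VGn n := Sum.inr (Sum.inl y)
def vc {n : ℕ} (y : Wn n) : VGn n := Sum.inr (Sum.inr (Sum.inl y))
def vd {n : ℕ} (x : Ln n) : VGn n := Sum.inr (Sum.inr (Sum.inr x))

/-- The graph `G_n`: edges `b_y c_z` for all `y, z ∈ W n`, `a_x b_y` whenever `x` is a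
prefix of `y`, and `d_x c_y` whenever `x` is a prefix of `y`. -/
def Gn (n : ℕ) : SimpleGraph (VGn n) where
  Adj u v :=
    match u, v with
    | Sum.inl x, Sum.inr (Sum.inl y) => x.1 <+: y.1
    | Sum.inr (Sum.inl y), Sum.inl x => x.1 <+: y.1
    | Sum.inr (Sum.inl _), Sum.inr (Sum.inr (Sum.inl _)) => True
    | Sum.inr (Sum.inr (Sum.inl _)), Sum.inr (Sum.inl _) => True
    | Sum.inr (Sum.inr (Sum.inl y)), Sum.inr (Sum.inr (Sum.inr x)) => x.1 <+: y.1
    | Sum.inr (Sum.inr (Sum.inr x)), Sum.inr (Sum.inr (Sum.inl y)) => x.1 <+: y.1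
    | _, _ => False
  symm := by
    constructor
    rintro (x | y | z | w) (x' | y' | z' | w') h <;> exact h
  loopless := by
    constructor
    rintro (x | y | z | w) h <;> exact h

open SimpleGraph

variable {n : ℕ}

def extW (n : ℕ) (x : Ln n) : Wn n :=
  ⟨x.1 ++ List.replicate (n - x.1.length) false, by
    simp [Nat.add_sub_cancel' x.2.1]⟩

lemma extW_prefix (x : Ln n) : x.1 <+: (extW n x).1 := ⟨_, rfl⟩

lemma adj_ab (x : Ln n) (y : Wn n) (h : x.1 <+: y.1) : (Gn n).Adj (va x) (vb y) := h
lemma adj_bc (y z : Wn n) : (Gn n).Adj (vb y) (vc z) := trivial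
lemma adj_dc (x : Ln n) (y : Wn n) (h : x.1 <+: y.1) : (Gn n).Adj (vd x) (vc y) := h

lemma not_adj_ca (z : Wn n) (x : Ln n) : ¬ (Gn n).Adj (vc z) (va x) := fun h => h
lemma not_adj_da (x' x : Ln n) : ¬ (Gn n).Adj (vd x') (va x) := fun h => h

lemma reach_to_b (u : VGn n) : ∃ y : Wn n, (Gn n).Reachable u (vb y) := by
  rcases u with x | y | z | x
  · exact ⟨extW n x, (adj_ab x _ (extW_prefix x)).reachable⟩
  · exact ⟨y, .refl _⟩
  · exact ⟨z, ((adj_bc z z).reachable).symm⟩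
  · exact ⟨extW n x, ((adj_dc x _ (extW_prefix x)).reachable).trans
      ((adj_bc (extW n x) (extW n x)).reachable).symm⟩

lemma reach_bb (y y' : Wn n) : (Gn n).Reachable (vb y) (vb y') :=
  (adj_bc y y).reachable.trans ((adj_bc y' y).reachable).symm

lemma Gn_preconnected : (Gn n).Preconnected := by
  intro u v
  obtain ⟨y, hy⟩ := reach_to_b u
  obtain ⟨y', hy'⟩ := reach_to_b v
  exact hy.trans ((reach_bb y y').trans hy'.symm)

lemma dist_ca (z : Wn n) (x : Ln n) : (Gn n).dist (vc z) (va x) = 2 := by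
  have hne : vc z ≠ va x := by simp [vc, va]
  obtain ⟨w, hw⟩ : ∃ w : (Gn n).Walk (vc z) (va x), w.length = 2 :=
    ⟨.cons ((adj_bc (extW n x) z).symm)
      (.cons ((adj_ab x (extW n x) (extW_prefix x)).symm) .nil), rfl⟩
  have hle := SimpleGraph.dist_le w
  simp only [hw, SimpleGraph.Walk.length_cons, SimpleGraph.Walk.length_nil] at hle
  have hpos : 0 < (Gn n).dist (vc z) (va x) :=
    SimpleGraph.Reachable.pos_dist_of_ne ⟨w⟩ hne
  have h1 : (Gn n).dist (vc z) (va x) ≠ 1 :=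
    fun h => not_adj_ca z x (SimpleGraph.dist_eq_one_iff_adj.mp h)
  omega

lemma dist_da_ne_two (x' x : Ln n) : (Gn n).dist (vd x') (va x) ≠ 2 := by
  intro h
  have hr : (Gn n).Reachable (vd x') (va x) := Gn_preconnected _ _
  obtain ⟨p, hp⟩ := hr.exists_walk_length_eq_dist
  rw [h] at hp
  cases p with
  | cons h1 q =>
    cases q with
    | nil => simp at hp
    | cons h2 q2 =>
      cases q2 with
      | nil =>
        rename_i w
        rcases w with x | y | z | t
        · exact h1
        · exact h1
        · exact h2
        · exact h1
      | cons h3 q3 => simp at hp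

lemma exists_sep : ∀ (y y' : List Bool), y.length = y'.length → y ≠ y' →
    ∃ x : List Bool, x.getLast? = some true ∧ x.length ≤ y.length ∧
      ((x <+: y ∧ ¬ x <+: y') ∨ (x <+: y' ∧ ¬ x <+: y)) := by
  intro y
  induction y with
  | nil =>
    intro y' hl hne
    cases y' with
    | nil => exact absurd rfl hne
    | cons b' t' => simp at hl
  | cons b t ih =>
    intro y' hl hne
    cases y' with
    | nil => simp at hl
    | cons b' t' =>
      by_cases hb : b = b'
      · subst hb
        have ht : t ≠ t' := fun h => hne (by rw [h])
        obtain ⟨x0, hlast, hlen, hcase⟩ := ih t' (by simpa using hl) ht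
        have hx0 : x0 ≠ [] := by intro h; simp [h] at hlast
        refine ⟨b :: x0, ?_, by simp; omega, ?_⟩
        · rcases x0 with _ | ⟨a, s⟩
          · exact absurd rfl hx0
          · simpa using hlast
        · rcases hcase with ⟨h1, h2⟩ | ⟨h1, h2⟩
          · exact Or.inl ⟨by simp [List.cons_prefix_cons, h1],
              by simp [List.cons_prefix_cons]; exact h2⟩
          · exact Or.inr ⟨by simp [List.cons_prefix_cons, h1],
              by simp [List.cons_prefix_cons]; exact h2⟩
      · rcases b with _ | _ <;> rcases b' with _ | _
        · exact absurd rfl hb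
        · refine ⟨[true], rfl, by simp, Or.inr ⟨⟨t', rfl⟩, ?_⟩⟩
          simp [List.cons_prefix_cons]
        · refine ⟨[true], rfl, by simp, Or.inl ⟨⟨t, rfl⟩, ?_⟩⟩
          simp [List.cons_prefix_cons]
        · exact absurd rfl hb

lemma a_resolves (x : Ln n) (u' : VGn n) (h : u' ≠ va x) :
    (Gn n).dist (va x) (va x) ≠ (Gn n).dist u' (va x) := by
  rw [SimpleGraph.dist_self]
  intro h0
  exact h ((Gn_preconnected u' (va x)).dist_eq_zero_iff.mp h0.symm)

lemma dist_ba (y : Wn n) (x : Ln n) (h : x.1 <+: y.1) :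
    (Gn n).dist (vb y) (va x) = 1 :=
  SimpleGraph.dist_eq_one_iff_adj.mpr ((adj_ab x y h).symm)

lemma dist_ba_ne_one (y : Wn n) (x : Ln n) (h : ¬ x.1 <+: y.1) :
    (Gn n).dist (vb y) (va x) ≠ 1 :=
  fun hd => h (SimpleGraph.dist_eq_one_iff_adj.mp hd)

lemma dist_da_ne_one (x' x : Ln n) : (Gn n).dist (vd x') (va x) ≠ 1 :=
  fun hd => not_adj_da x' x (SimpleGraph.dist_eq_one_iff_adj.mp hd)

lemma sep_bb (y y' : Wn n) (h : y ≠ y') :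
    ∃ x : Ln n, (Gn n).dist (vb y) (va x) ≠ (Gn n).dist (vb y') (va x) := by
  have hne : y.1 ≠ y'.1 := fun h' => h (Subtype.ext h')
  obtain ⟨xl, hlast, hlen, hcase⟩ := exists_sep y.1 y'.1 (y.2.trans y'.2.symm) hne
  refine ⟨⟨xl, y.2 ▸ hlen, Or.inr hlast⟩, ?_⟩
  rcases hcase with ⟨h1, h2⟩ | ⟨h1, h2⟩
  · rw [dist_ba y _ h1]
    exact (dist_ba_ne_one y' _ h2).symm
  · rw [dist_ba y' _ h1]
    exact dist_ba_ne_one y _ h2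

/-- For `n ≥ 1`, the set `A = {a_x : x ∈ L_n}` is a resolving set in `G_n` for
`{a_x : x ∈ L_n} ∪ {b_y : y ∈ W_n} ∪ {c_{0⋯0}, d_∅}`. -/
theorem stmt12 (n : ℕ) (hn : 1 ≤ n) :
    ∀ u u' : VGn n,
      ((∃ x, u = va x) ∨ (∃ y, u = vb y) ∨
        u = vc ⟨List.replicate n false, by simp⟩ ∨ u = vd ⟨[], by simp⟩) →
      ((∃ x, u' = va x) ∨ (∃ y, u' = vb y) ∨
        u' = vc ⟨List.replicate n false, by simp⟩ ∨ u' = vd ⟨[], by simp⟩) →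
      u ≠ u' →
      ∃ x : Ln n, (Gn n).dist u (va x) ≠ (Gn n).dist u' (va x) := by
  intro u u' hu hu' hne
  set c0 : Wn n := ⟨List.replicate n false, by simp⟩ with hc0
  set e : Ln n := ⟨[], by simp⟩ with he
  have heps : ∀ w : Wn n, e.1 <+: w.1 := fun w => List.nil_prefix
  rcases hu with ⟨x, rfl⟩ | ⟨y, rfl⟩ | rfl | rfl
  · exact ⟨x, a_resolves x u' hne.symm⟩
  · rcases hu' with ⟨x, rfl⟩ | ⟨y', rfl⟩ | rfl | rfl
    · exact ⟨x, (a_resolves x (vb y) hne).symm⟩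
    · exact sep_bb y y' (fun h => hne (by rw [h]))
    · refine ⟨e, ?_⟩
      rw [dist_ba y e (heps y), dist_ca c0 e]
      omega
    · refine ⟨e, ?_⟩
      rw [dist_ba y e (heps y)]
      exact (dist_da_ne_one e e).symm
  · rcases hu' with ⟨x, rfl⟩ | ⟨y', rfl⟩ | rfl | rfl
    · exact ⟨x, (a_resolves x (vc c0) hne).symm⟩
    · refine ⟨e, ?_⟩
      rw [dist_ba y' e (heps y'), dist_ca c0 e]
      omega
    · exact absurd rfl hne
    · refine ⟨e, ?_⟩
      rw [dist_ca c0 e]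
      exact (dist_da_ne_two e e).symm
  · rcases hu' with ⟨x, rfl⟩ | ⟨y', rfl⟩ | rfl | rfl
    · exact ⟨x, (a_resolves x (vd e) hne).symm⟩
    · refine ⟨e, ?_⟩
      rw [dist_ba y' e (heps y')]
      exact dist_da_ne_one e e
    · refine ⟨e, ?_⟩
      rw [dist_ca c0 e]
      exact dist_da_ne_two e e
    · exact absurd rfl hne
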